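/- Let p be a prime and V = F_p^d a d-dimensional vector space over the field with p elements. Let D = (P, B, I) be a non-trivial 2-design whose point set P is V, and let G ≤ Aut(D) be locally primitive. Suppose the group N of all translations {x ↦ x + w : w ∈ V} is contained in G, is normal in G, and is not transitive on B. Then there is an integer i with 0 < i < d such that for every block β ∈ B, the point set D(β) is a coset W + u of some i-dimensional linear subspace W ≤ V; consequently D is a subdesign of AG_i(d, p) and is non-symmetric, i.e., |B| > |P|. -/

import Mathlib

open Pointwise

/-- A subgroup `H ≤ G` acts primitively on an (invariant) subset `S` of `X`: `H` leaves `S`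
invariant, acts transitively on `S`, and every `H`-invariant block `Δ ⊆ S` (i.e. each `h ∈ H`
maps `Δ` to itself or to a set disjoint from it) is a singleton/empty or all of `S`. -/
def IsPrimitiveOn {G X : Type*} [Group G] [MulAction G X] (H : Subgroup G) (S : Set X) : Prop :=
  (∀ h ∈ H, ∀ x ∈ S, h • x ∈ S) ∧
  (∀ x ∈ S, ∀ y ∈ S, ∃ h ∈ H, h • x = y) ∧
  (∀ Δ : Set X, Δ ⊆ S → (∀ h ∈ H, h • Δ = Δ ∨ Disjoint (h • Δ) Δ) →
    Δ.Subsingleton ∨ Δ = S)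

/-- A design `(P, B, I)` is `G`-locally primitive: for every point `α` the stabilizer `G_α`
acts primitively on the set `D(α)` of blocks incident with `α`, and for every block `β` the
stabilizer `G_β` acts primitively on the set `D(β)` of points incident with `β`. -/
def LocallyPrimitive (G : Type*) {P B : Type*} [Group G] [MulAction G P] [MulAction G B]
    (I : P → B → Prop) : Prop :=
  (∀ α : P, IsPrimitiveOn (MulAction.stabilizer G α) {β : B | I α β}) ∧
  (∀ β : B, IsPrimitiveOn (MulAction.stabilizer G β) {α : P | I α β})

/-- Let `p` be a prime, `V = F_p^d`, and let `D = (P, B, I)` be a non-trivial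
2-design with point set `V`, `G ≤ Aut(D)` locally primitive. Suppose the group `N` of all
translations of `V` is contained in `G`, is normal in `G`, and is not transitive on `B`.
Then there is `0 < i < d` such that every block's point set is a coset `W + u` of an
`i`-dimensional subspace `W ≤ V`; consequently `D` is a subdesign of `AG_i(d, p)` and is
non-symmetric, i.e. `|P| < |B|`. -/
theorem stmt_15 {p : ℕ} [Fact p.Prime] {V : Type*} [AddCommGroup V] [Module (ZMod p) V]
    [Fintype V] {Bl G : Type*} [Fintype Bl] [Group G]
    [MulAction G V] [MulAction G Bl] [FaithfulSMul G V]
    (d : ℕ) (hd : Module.finrank (ZMod p) V = d)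
    (I : V → Bl → Prop) (k lam : ℕ) (hk2 : 2 ≤ k) (hlam1 : 1 ≤ lam)
    (hk : ∀ β : Bl, Nat.card {x : V | I x β} = k)
    (hlam : ∀ x y : V, x ≠ y → Nat.card {β : Bl | I x β ∧ I y β} = lam)
    (hnontriv : k < Nat.card V)
    (hpres : ∀ (g : G) (x : V) (β : Bl), I x β ↔ I (g • x) (g • β))
    (hlp : LocallyPrimitive G I)
    (N : Subgroup G) (hN : N.Normal)
    (hNtransl : ∀ n ∈ N, ∃ w : V, ∀ x : V, n • x = x + w)
    (hNall : ∀ w : V, ∃ n ∈ N, ∀ x : V, n • x = x + w)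
    (hNnotBtrans : ¬ ∀ β₁ β₂ : Bl, ∃ n ∈ N, n • β₁ = β₂) :
    ∃ i : ℕ, 0 < i ∧ i < d ∧
      (∀ β : Bl, ∃ (W : Submodule (ZMod p) V) (u : V),
        Module.finrank (ZMod p) W = i ∧ {x : V | I x β} = {x : V | x - u ∈ W}) ∧
      Nat.card V < Nat.card Bl := by
  classical
  have hp : p.Prime := Fact.out
  have hp1 : 1 < p := hp.one_lt
  choose t htN ht using hNall
  have hfaith : ∀ g h : G, (∀ x : V, g • x = h • x) → g = h := fun g h H =>
    eq_of_smul_eq_smul H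
  have ht0 : t 0 = 1 := hfaith _ _ (fun x => by rw [ht, one_smul, add_zero])
  have htadd : ∀ w w' : V, t (w + w') = t w * t w' := by
    intro w w'
    refine hfaith _ _ fun x => ?_
    rw [ht, mul_smul, ht, ht]
    abel
  have htneg : ∀ w : V, t (-w) = (t w)⁻¹ := by
    intro w
    have h1 : t w * t (-w) = 1 := by rw [← htadd, add_neg_cancel, ht0]
    exact eq_inv_of_mul_eq_one_right h1
  -- the translation subgroup fixing a block
  set T : Bl → Set V := fun β => {w : V | t w • β = β} with hTdef
  have hT0 : ∀ β, (0 : V) ∈ T β := fun β => by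
    show t 0 • β = β; rw [ht0, one_smul]
  have hTadd : ∀ β (w w' : V), w ∈ T β → w' ∈ T β → w + w' ∈ T β := by
    intro β w w' hw hw'
    show t (w + w') • β = β
    rw [htadd, mul_smul, hw', hw]
  have hTneg : ∀ β (w : V), w ∈ T β → -w ∈ T β := by
    intro β w hw
    show t (-w) • β = β
    rw [htneg, inv_smul_eq_iff, hw]
  have hTsub : ∀ β (w w' : V), w ∈ T β → w' ∈ T β → w - w' ∈ T β := by
    intro β w w' hw hw'
    rw [sub_eq_add_neg]
    exact hTadd β w (-w') hw (hTneg β w' hw')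
  have hconj : ∀ (h : G) (w : V), ∃ w' : V, h * t w * h⁻¹ = t w' := by
    intro h w
    obtain ⟨w', hw'⟩ := hNtransl _ (hN.conj_mem _ (htN w) h)
    exact ⟨w', hfaith _ _ fun x => by rw [hw', ht]⟩
  -- every block is incident with at least one point, in fact two
  have hDne : ∀ β : Bl, ∃ x : V, I x β := by
    intro β
    have h1 : 0 < Nat.card {x : V | I x β} := by rw [hk β]; omega
    obtain ⟨⟨x, hx⟩⟩ := (Nat.card_pos_iff.mp h1).1
    exact ⟨x, hx⟩
  -- key dichotomy from primitivity on a block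
  have dich : ∀ (β : Bl) (α₀ : V), I α₀ β →
      {x : V | I x β} = {x : V | x - α₀ ∈ T β} ∨ T β = {0} := by
    intro β α₀ hα₀
    have hΔS : {x : V | x - α₀ ∈ T β} ⊆ {x : V | I x β} := by
      intro x hx
      have hx' : t (x - α₀) • β = β := hx
      have h1 := (hpres (t (x - α₀)) α₀ β).mp hα₀
      have h2 : t (x - α₀) • α₀ = x := by rw [ht]; abel
      rw [hx', h2] at h1
      exact h1
    have hsmul : ∀ h ∈ MulAction.stabilizer G β,
        h • {x : V | x - α₀ ∈ T β} = {x : V | x - h • α₀ ∈ T β} := by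
      intro h hh
      have hhβ : h • β = β := MulAction.mem_stabilizer_iff.mp hh
      ext y
      rw [Set.mem_smul_set_iff_inv_smul_mem]
      obtain ⟨w₂, hw₂⟩ := hconj h⁻¹ (y - h • α₀)
      rw [inv_inv] at hw₂
      have hy : t (y - h • α₀) • (h • α₀) = y := by rw [ht]; abel
      have h3 : h⁻¹ • y = α₀ + w₂ := by
        conv_lhs => rw [← hy]
        rw [smul_smul, smul_smul, hw₂, ht]
      have h4 : t w₂ • β = h⁻¹ • t (y - h • α₀) • β := by
        rw [← hw₂, mul_smul, mul_smul, hhβ]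
      have h5 : w₂ ∈ T β ↔ y - h • α₀ ∈ T β := by
        show t w₂ • β = β ↔ t (y - h • α₀) • β = β
        rw [h4, inv_smul_eq_iff, hhβ]
      simp only [Set.mem_setOf_eq, h3, add_sub_cancel_left]
      exact h5
    have hblock : ∀ h ∈ MulAction.stabilizer G β,
        h • {x : V | x - α₀ ∈ T β} = {x : V | x - α₀ ∈ T β} ∨
        Disjoint (h • {x : V | x - α₀ ∈ T β}) {x : V | x - α₀ ∈ T β} := by
      intro h hh
      rw [hsmul h hh]
      by_cases hc : h • α₀ - α₀ ∈ T β
      · left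
        ext x
        simp only [Set.mem_setOf_eq]
        constructor
        · intro hx
          have := hTadd β _ _ hx hc
          rwa [sub_add_sub_cancel] at this
        · intro hx
          have := hTsub β _ _ hx hc
          rwa [sub_sub_sub_cancel_right] at this
      · right
        rw [Set.disjoint_left]
        intro x hx hx'
        apply hc
        have := hTsub β _ _ hx' hx
        rwa [sub_sub_sub_cancel_left] at this
    rcases (hlp.2 β).2.2 {x : V | x - α₀ ∈ T β} hΔS hblock with hss | heq
    · right
      ext w
      simp only [Set.mem_singleton_iff]
      constructor
      · intro hw
        have h1 : α₀ ∈ {x : V | x - α₀ ∈ T β} := by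
          simp only [Set.mem_setOf_eq, sub_self]; exact hT0 β
        have h2 : α₀ + w ∈ {x : V | x - α₀ ∈ T β} := by
          simp only [Set.mem_setOf_eq, add_sub_cancel_left]; exact hw
        have h3 := hss h2 h1
        have : α₀ + w = α₀ + 0 := by rw [add_zero]; exact h3
        exact add_left_cancel this
      · rintro rfl; exact hT0 β
    · left; exact heq.symm
  -- T β is never trivial
  have hnotriv : ∀ β₀ : Bl, T β₀ ≠ {0} := by
    intro β₀ hTβ₀
    apply hNnotBtrans
    have h2 : Nontrivial {x : V | I x β₀} := by
      have h1 : 1 < Nat.card {x : V | I x β₀} := by rw [hk β₀]; omega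
      letI : Fintype {x : V | I x β₀} := Fintype.ofFinite _
      rw [Nat.card_eq_fintype_card] at h1
      exact Fintype.one_lt_card_iff_nontrivial.mp h1
    obtain ⟨⟨α₀, hα₀⟩, ⟨α₁, hα₁⟩, hne⟩ := h2
    have hne' : α₀ ≠ α₁ := fun h => hne (Subtype.ext h)
    set Δ : Set Bl := {β : Bl | I α₀ β ∧ ∃ n ∈ N, n • β₀ = β} with hΔdef
    have hΔS : Δ ⊆ {β : Bl | I α₀ β} := fun β hβ => hβ.1
    have hblock : ∀ h ∈ MulAction.stabilizer G α₀, h • Δ = Δ ∨ Disjoint (h • Δ) Δ := by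
      intro h hh
      have hhα : h • α₀ = α₀ := MulAction.mem_stabilizer_iff.mp hh
      have hsm : h • Δ = {β : Bl | I α₀ β ∧ ∃ n ∈ N, n • (h • β₀) = β} := by
        ext y
        rw [Set.mem_smul_set_iff_inv_smul_mem]
        simp only [hΔdef, Set.mem_setOf_eq]
        constructor
        · rintro ⟨hI, n, hn, hnβ⟩
          refine ⟨?_, h * n * h⁻¹, hN.conj_mem n hn h, ?_⟩
          · have := (hpres h α₀ (h⁻¹ • y)).mp hI
            rwa [hhα, smul_inv_smul] at this
          · rw [mul_smul, mul_smul, inv_smul_smul, hnβ, smul_inv_smul]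
        · rintro ⟨hI, n, hn, hnβ⟩
          refine ⟨?_, h⁻¹ * n * h, ?_, ?_⟩
          · have hhα' : h⁻¹ • α₀ = α₀ := by rw [inv_smul_eq_iff, hhα]
            have := (hpres h⁻¹ α₀ y).mp hI
            rwa [hhα'] at this
          · have := hN.conj_mem n hn h⁻¹
            rwa [inv_inv] at this
          · rw [mul_smul, mul_smul, hnβ]
      rw [hsm]
      by_cases hc : ∃ n ∈ N, n • β₀ = h • β₀
      · left
        obtain ⟨n, hn, hnβ⟩ := hc
        ext y
        simp only [hΔdef, Set.mem_setOf_eq]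
        constructor
        · rintro ⟨hI, m, hm, hmβ⟩
          exact ⟨hI, m * n, mul_mem hm hn, by rw [mul_smul, hnβ, hmβ]⟩
        · rintro ⟨hI, m, hm, hmβ⟩
          refine ⟨hI, m * n⁻¹, mul_mem hm (inv_mem hn), ?_⟩
          rw [mul_smul, ← hnβ, inv_smul_smul, hmβ]
      · right
        rw [Set.disjoint_left]
        rintro y ⟨hI, m, hm, hmβ⟩ ⟨hI', m', hm', hmβ'⟩
        exact hc ⟨m⁻¹ * m', mul_mem (inv_mem hm) hm',
          by rw [mul_smul, hmβ', ← hmβ, inv_smul_smul]⟩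
    rcases (hlp.1 α₀).2.2 Δ hΔS hblock with hss | heq
    · exfalso
      have hb1 : β₀ ∈ Δ := ⟨hα₀, t 0, htN 0, by rw [ht0, one_smul]⟩
      have hb2 : t (α₀ - α₁) • β₀ ∈ Δ := by
        refine ⟨?_, t (α₀ - α₁), htN _, rfl⟩
        have h1 := (hpres (t (α₀ - α₁)) α₁ β₀).mp hα₁
        have e : t (α₀ - α₁) • α₁ = α₀ := by rw [ht]; abel
        rwa [e] at h1
      have h3 : t (α₀ - α₁) • β₀ = β₀ := hss hb2 hb1
      have h4 : α₀ - α₁ ∈ T β₀ := h3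
      rw [hTβ₀, Set.mem_singleton_iff, sub_eq_zero] at h4
      exact hne' h4
    · have horb : ∀ β : Bl, ∃ n ∈ N, n • β₀ = β := by
        intro β
        obtain ⟨γ, hγ⟩ := hDne β
        have h1 : I α₀ (t (α₀ - γ) • β) := by
          have h0 := (hpres (t (α₀ - γ)) γ β).mp hγ
          have e : t (α₀ - γ) • γ = α₀ := by rw [ht]; abel
          rwa [e] at h0
        have h2 : t (α₀ - γ) • β ∈ Δ := by rw [heq]; exact h1
        obtain ⟨_, n, hn, hnβ⟩ := h2
        exact ⟨(t (α₀ - γ))⁻¹ * n, mul_mem (inv_mem (htN _)) hn,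
          by rw [mul_smul, hnβ, inv_smul_smul]⟩
      intro β₁ β₂
      obtain ⟨n₁, hn₁, h1⟩ := horb β₁
      obtain ⟨n₂, hn₂, h2⟩ := horb β₂
      exact ⟨n₂ * n₁⁻¹, mul_mem hn₂ (inv_mem hn₁),
        by rw [mul_smul, ← h1, inv_smul_smul, h2]⟩
  -- hence every block is a coset
  have hcoset : ∀ β : Bl, ∃ α₀ : V, I α₀ β ∧ {x : V | I x β} = {x : V | x - α₀ ∈ T β} := by
    intro β
    obtain ⟨α₀, hα₀⟩ := hDne β
    rcases dich β α₀ hα₀ with h | h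
    · exact ⟨α₀, hα₀, h⟩
    · exact absurd h (hnotriv β)
  choose u hu1 hu2 using hcoset
  -- T β as a submodule
  have hWex : ∀ β : Bl, ∃ W : Submodule (ZMod p) V, (W : Set V) = T β := by
    intro β
    exact ⟨AddSubgroup.toZModSubmodule p
      { carrier := T β
        zero_mem' := hT0 β
        add_mem' := fun ha hb => hTadd β _ _ ha hb
        neg_mem' := fun ha => hTneg β _ ha }, rfl⟩
  choose Wm hWm using hWex
  -- cardinality of T β is k
  have hcardT : ∀ β : Bl, Nat.card (T β) = k := by
    intro β
    have h1 : {x : V | x - u β ∈ T β} = (fun w => w + u β) '' (T β) := by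
      ext x
      simp only [Set.mem_setOf_eq, Set.mem_image]
      constructor
      · intro hx; exact ⟨x - u β, hx, by abel⟩
      · rintro ⟨w, hw, rfl⟩; rwa [add_sub_cancel_right]
    have h2 := hk β
    rw [hu2 β, h1, Nat.card_coe_set_eq,
      Set.ncard_image_of_injective _ (add_left_injective (u β)),
      ← Nat.card_coe_set_eq] at h2
    exact h2
  have hcardW : ∀ β : Bl, k = p ^ Module.finrank (ZMod p) (Wm β) := by
    intro β
    letI : Fintype (Wm β) := Fintype.ofFinite _
    calc k = Nat.card (T β) := (hcardT β).symm
      _ = Nat.card (Wm β) := by rw [← hWm β]; rfl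
      _ = Fintype.card (Wm β) := Nat.card_eq_fintype_card
      _ = p ^ Module.finrank (ZMod p) (Wm β) := by
          rw [Module.card_eq_pow_finrank (K := ZMod p), ZMod.card]
  have hv : Nat.card V = p ^ d := by
    rw [Nat.card_eq_fintype_card, Module.card_eq_pow_finrank (K := ZMod p) (V := V), ZMod.card, hd]
  -- Bl is nonempty
  have hVnt : Nontrivial V := by
    have h1 : 1 < Nat.card V := by omega
    rw [Nat.card_eq_fintype_card] at h1
    exact Fintype.one_lt_card_iff_nontrivial.mp h1
  obtain ⟨x₀, y₀, hxy⟩ := exists_pair_ne V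
  have hBl : Nonempty Bl := by
    have h1 : 0 < Nat.card {β : Bl | I x₀ β ∧ I y₀ β} := by rw [hlam x₀ y₀ hxy]; omega
    obtain ⟨⟨β, _⟩⟩ := (Nat.card_pos_iff.mp h1).1
    exact ⟨β⟩
  obtain ⟨β₀⟩ := hBl
  set i := Module.finrank (ZMod p) (Wm β₀) with hidef
  have hki : k = p ^ i := hcardW β₀
  have hfr : ∀ β : Bl, Module.finrank (ZMod p) (Wm β) = i := fun β =>
    Nat.pow_right_injective hp.two_le ((hcardW β).symm.trans hki)
  have hi0 : 0 < i := by
    rcases Nat.eq_zero_or_pos i with h | h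
    · rw [h, pow_zero] at hki; omega
    · exact h
  have hid : i < d := by
    have h1 : p ^ i < p ^ d := by rw [← hki, ← hv]; exact hnontriv
    exact (Nat.pow_lt_pow_iff_right hp1).mp h1
  -- counting
  have hDPcard : ∀ β : Bl, (Finset.univ.filter fun x : V => I x β).card = k := by
    intro β
    have h := hk β
    rwa [Nat.card_coe_set_eq, Set.ncard_eq_toFinset_card', Set.toFinset_setOf] at h
  have hlamcard : ∀ x y : V, x ≠ y →
      (Finset.univ.filter fun β : Bl => I x β ∧ I y β).card = lam := by
    intro x y hxy'
    have h := hlam x y hxy'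
    rwa [Nat.card_coe_set_eq, Set.ncard_eq_toFinset_card', Set.toFinset_setOf] at h
  have hr : ∀ α : V, (Finset.univ.filter fun β : Bl => I α β).card * (k - 1)
      = (Fintype.card V - 1) * lam := by
    intro α
    set S : Finset (Bl × V) :=
      Finset.univ.filter (fun q : Bl × V => I α q.1 ∧ I q.2 q.1 ∧ q.2 ≠ α) with hSdef
    have hfib1 : ∀ β ∈ (Finset.univ.filter fun β : Bl => I α β),
        (S.filter (fun q => q.1 = β)).card = k - 1 := by
      intro β hβ
      have hβI : I α β := by
        simpa only [Finset.mem_filter, Finset.mem_univ, true_and] using hβ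
      have he : S.filter (fun q => q.1 = β)
          = {β} ×ˢ ((Finset.univ.filter fun y : V => I y β).erase α) := by
        ext ⟨b, y⟩
        simp only [hSdef, Finset.mem_filter, Finset.mem_univ, true_and,
          Finset.mem_product, Finset.mem_singleton, Finset.mem_erase]
        constructor
        · rintro ⟨⟨hIα, hIy, hyne⟩, rfl⟩
          exact ⟨rfl, hyne, hIy⟩
        · rintro ⟨rfl, hyne, hy⟩
          exact ⟨⟨hβI, hy, hyne⟩, rfl⟩
      rw [he, Finset.card_product, Finset.card_singleton, one_mul,
        Finset.card_erase_of_mem (by simp [hβI]), hDPcard β]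
    have h1 : S.card = (Finset.univ.filter fun β : Bl => I α β).card * (k - 1) := by
      calc S.card = ∑ β ∈ (Finset.univ.filter fun β : Bl => I α β),
          (S.filter (fun q => q.1 = β)).card :=
            Finset.card_eq_sum_card_fiberwise (fun q hq => by
              simp only [Finset.mem_coe, hSdef, Finset.mem_filter, Finset.mem_univ, true_and] at hq ⊢
              exact hq.1)
        _ = ∑ _β ∈ (Finset.univ.filter fun β : Bl => I α β), (k - 1) :=
            Finset.sum_congr rfl hfib1
        _ = (Finset.univ.filter fun β : Bl => I α β).card * (k - 1) := by
            rw [Finset.sum_const, smul_eq_mul]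
    have hfib2 : ∀ y ∈ Finset.univ.erase α,
        (S.filter (fun q => q.2 = y)).card = lam := by
      intro y hy
      have hyne : y ≠ α := by
        simpa only [Finset.mem_erase, Finset.mem_univ, and_true] using hy
      have he : S.filter (fun q => q.2 = y)
          = ((Finset.univ.filter fun β : Bl => I α β ∧ I y β)) ×ˢ {y} := by
        ext ⟨b, z⟩
        simp only [hSdef, Finset.mem_filter, Finset.mem_univ, true_and,
          Finset.mem_product, Finset.mem_singleton]
        constructor
        · rintro ⟨⟨hIα, hIy, _⟩, rfl⟩
          exact ⟨⟨hIα, hIy⟩, rfl⟩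
        · rintro ⟨⟨hIα, hIy⟩, rfl⟩
          exact ⟨⟨hIα, hIy, hyne⟩, rfl⟩
      rw [he, Finset.card_product, Finset.card_singleton, mul_one,
        hlamcard α y (Ne.symm hyne)]
    have h2 : S.card = (Fintype.card V - 1) * lam := by
      calc S.card = ∑ y ∈ Finset.univ.erase α, (S.filter (fun q => q.2 = y)).card :=
            Finset.card_eq_sum_card_fiberwise (fun q hq => by
              simp only [Finset.mem_coe, hSdef, Finset.mem_filter, Finset.mem_univ, true_and] at hq
              simp only [Finset.mem_coe, Finset.mem_erase, Finset.mem_univ, and_true]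
              exact hq.2.2)
        _ = ∑ _y ∈ Finset.univ.erase α, lam := Finset.sum_congr rfl hfib2
        _ = (Fintype.card V - 1) * lam := by
            rw [Finset.sum_const, smul_eq_mul,
              Finset.card_erase_of_mem (Finset.mem_univ α), Finset.card_univ]
    omega
  have hrconst : ∀ α : V, (Finset.univ.filter fun β : Bl => I α β).card
      = (Finset.univ.filter fun β : Bl => I (0 : V) β).card := by
    intro α
    have := (hr α).trans (hr 0).symm
    exact Nat.eq_of_mul_eq_mul_right (by omega) this
  set r := (Finset.univ.filter fun β : Bl => I (0 : V) β).card with hrdef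
  have htot : Fintype.card V * r = Fintype.card Bl * k := by
    set F : Finset (V × Bl) := Finset.univ.filter (fun q : V × Bl => I q.1 q.2) with hFdef
    have hfib1 : ∀ α ∈ (Finset.univ : Finset V),
        (F.filter (fun q => q.1 = α)).card = r := by
      intro α _
      have he : F.filter (fun q => q.1 = α)
          = {α} ×ˢ (Finset.univ.filter fun β : Bl => I α β) := by
        ext ⟨x, b⟩
        simp only [hFdef, Finset.mem_filter, Finset.mem_univ, true_and,
          Finset.mem_product, Finset.mem_singleton]
        constructor
        · rintro ⟨hI, rfl⟩; exact ⟨rfl, hI⟩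
        · rintro ⟨rfl, hI⟩; exact ⟨hI, rfl⟩
      rw [he, Finset.card_product, Finset.card_singleton, one_mul, hrconst α]
    have h1 : F.card = Fintype.card V * r := by
      calc F.card = ∑ α ∈ (Finset.univ : Finset V), (F.filter (fun q => q.1 = α)).card :=
            Finset.card_eq_sum_card_fiberwise (fun q _ => Finset.mem_univ _)
        _ = ∑ _α ∈ (Finset.univ : Finset V), r := Finset.sum_congr rfl hfib1
        _ = Fintype.card V * r := by rw [Finset.sum_const, smul_eq_mul, Finset.card_univ]
    have hfib2 : ∀ β ∈ (Finset.univ : Finset Bl),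
        (F.filter (fun q => q.2 = β)).card = k := by
      intro β _
      have he : F.filter (fun q => q.2 = β)
          = (Finset.univ.filter fun x : V => I x β) ×ˢ {β} := by
        ext ⟨x, b⟩
        simp only [hFdef, Finset.mem_filter, Finset.mem_univ, true_and,
          Finset.mem_product, Finset.mem_singleton]
        constructor
        · rintro ⟨hI, rfl⟩; exact ⟨hI, rfl⟩
        · rintro ⟨hI, rfl⟩; exact ⟨hI, rfl⟩
      rw [he, Finset.card_product, Finset.card_singleton, mul_one, hDPcard β]
    have h2 : F.card = Fintype.card Bl * k := by
      calc F.card = ∑ β ∈ (Finset.univ : Finset Bl), (F.filter (fun q => q.2 = β)).card :=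
            Finset.card_eq_sum_card_fiberwise (fun q _ => Finset.mem_univ _)
        _ = ∑ _β ∈ (Finset.univ : Finset Bl), k := Finset.sum_congr rfl hfib2
        _ = Fintype.card Bl * k := by rw [Finset.sum_const, smul_eq_mul, Finset.card_univ]
    omega
  -- arithmetic: r > k
  have hvcard : Fintype.card V = p ^ d := by rw [← Nat.card_eq_fintype_card, hv]
  have hmain : r * (k - 1) = (p ^ d - 1) * lam := by rw [hr 0, hvcard]
  set a := p ^ i with hadef
  set c := p ^ (d - i) with hcdef
  have hca : c * a = p ^ d := by
    show p ^ (d - i) * p ^ i = p ^ d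
    rw [← pow_add]; congr 1; omega
  have hc2 : 2 ≤ c := Nat.one_lt_pow (by omega) hp1
  have ha2 : 2 ≤ a := by rw [← hki]; exact hk2
  have hpd2 : 2 ≤ p ^ d := by
    calc 2 ≤ p := hp.two_le
    _ ≤ p ^ d := Nat.le_self_pow (by omega) p
  have hr0 : 0 < r := by
    rcases Nat.eq_zero_or_pos r with h | h
    · exfalso
      rw [h, zero_mul] at hmain
      have : 0 < (p ^ d - 1) * lam := Nat.mul_pos (by omega) (by omega)
      omega
    · exact h
  have hdvd : (p ^ d - 1) ∣ r * (k - 1) := ⟨lam, hmain⟩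
  set g := Nat.gcd (p ^ d - 1) (k - 1) with hgdef
  have hg0 : 0 < g := Nat.gcd_pos_of_pos_left _ (by omega)
  have hgd : g ∣ c - 1 := by
    have h1 : g ∣ p ^ d - 1 := Nat.gcd_dvd_left _ _
    have h2 : g ∣ c * (k - 1) := Dvd.dvd.mul_left (Nat.gcd_dvd_right _ _) c
    have h3 : c * (k - 1) = c * a - c := by rw [hki, Nat.mul_sub_one]
    have h4 := Nat.dvd_sub h1 h2
    have hle : c ≤ c * a := Nat.le_mul_of_pos_right c (by omega)
    have h5 : (p ^ d - 1) - c * (k - 1) = c - 1 := by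
      rw [h3]; omega
    rwa [h5] at h4
  have hAg : (p ^ d - 1) / g ∣ r := by
    have hco : Nat.Coprime ((p ^ d - 1) / g) ((k - 1) / g) :=
      Nat.coprime_div_gcd_div_gcd hg0
    obtain ⟨q, hq⟩ := hdvd
    refine hco.dvd_of_dvd_mul_right ⟨q, ?_⟩
    apply Nat.eq_of_mul_eq_mul_right hg0
    calc r * ((k - 1) / g) * g = r * ((k - 1) / g * g) := by ring
      _ = r * (k - 1) := by rw [Nat.div_mul_cancel (Nat.gcd_dvd_right _ _)]
      _ = (p ^ d - 1) * q := hq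
      _ = (p ^ d - 1) / g * g * q := by rw [Nat.div_mul_cancel (Nat.gcd_dvd_left _ _)]
      _ = (p ^ d - 1) / g * q * g := by ring
  have hrA : p ^ d - 1 ≤ r * g := by
    have h1 := Nat.le_of_dvd hr0 hAg
    calc p ^ d - 1 = (p ^ d - 1) / g * g := (Nat.div_mul_cancel (Nat.gcd_dvd_left _ _)).symm
      _ ≤ r * g := Nat.mul_le_mul_right g h1
  have hgle : g ≤ c - 1 := Nat.le_of_dvd (by omega) hgd
  have hrc : p ^ d - 1 ≤ r * (c - 1) := hrA.trans (Nat.mul_le_mul_left r hgle)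
  have hfin : a < r := by
    have h1 : a * (c - 1) < p ^ d - 1 := by
      have h2 : a * (c - 1) = a * c - a := Nat.mul_sub_one a c
      have h3 : a * c = c * a := mul_comm a c
      omega
    exact Nat.lt_of_mul_lt_mul_right (lt_of_lt_of_le h1 hrc)
  have hVlt : Nat.card V < Nat.card Bl := by
    rw [Nat.card_eq_fintype_card, Nat.card_eq_fintype_card (α := Bl)]
    have hv0 : 0 < Fintype.card V := Fintype.card_pos
    have h1 : Fintype.card V * k < Fintype.card Bl * k := by
      rw [← htot]
      exact (Nat.mul_lt_mul_left hv0).mpr (by rw [hki]; exact hfin)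
    exact Nat.lt_of_mul_lt_mul_right h1
  refine ⟨i, hi0, hid, fun β => ⟨Wm β, u β, hfr β, ?_⟩, hVlt⟩
  rw [hu2 β]
  ext x
  simp only [Set.mem_setOf_eq, ← hWm β, SetLike.mem_coe]
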